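/- Let I be a composition of n and let τ ∈ S_n be a permutation whose descent composition C(τ) has mirror image equal to I (i.e. \overline{C(τ)} = I). Then the Yang-Baxter element Y_{ω_n}(τ) ∈ H_n(0), where ω_n is the longest permutation, satisfies T_i · Y_{ω_n}(τ) = -Y_{ω_n}(τ) if i ∈ D(I) and T_i · Y_{ω_n}(τ) = 0 if i ∉ D(I); that is, Y_{ω_n}(τ) = η_I generates a copy of the one-dimensional simple H_n(0)-module S_I in the left regular representation. -/

import Mathlib

/-!
STATEMENT 4: Let `I` be a composition of `n` and `τ ∈ S_n` a permutation whose
descent composition `C(τ)` has mirror image equal to `I`.  Then the Yang-Baxter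
element `Y_{ω_n}(τ) ∈ H_n(0)` satisfies `T_i · Y_{ω_n}(τ) = -Y_{ω_n}(τ)` if
`i ∈ D(I)` and `T_i · Y_{ω_n}(τ) = 0` otherwise; that is, it equals `η_I` and
generates a copy of the one-dimensional simple module `S_I` in the left regular
representation (in particular it is nonzero).

The condition `‾C(τ) = I` is expressed through descent sets (0-indexed): `i` is a
descent of `I` iff `n-2-i` is a descent of `τ`.  The Yang-Baxter basis is encoded by
quantifying over any family `Y` satisfying its defining recursion.
-/

namespace AKSPaper

noncomputable section

/-- Defining relations of the 0-Hecke algebra `H_n(0)`.  The generator indexed by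
`i : Fin (n-1)` is `T_{i+1}` (1-indexed), acting on 0-indexed positions `i, i+1`. -/
inductive HeckeRel (n : ℕ) :
    FreeAlgebra ℂ (Fin (n - 1)) → FreeAlgebra ℂ (Fin (n - 1)) → Prop
  | quad (i : Fin (n - 1)) :
      HeckeRel n (FreeAlgebra.ι ℂ i * (1 + FreeAlgebra.ι ℂ i)) 0
  | braid (i j : Fin (n - 1)) (h : (i : ℕ) + 1 = j) :
      HeckeRel n (FreeAlgebra.ι ℂ i * FreeAlgebra.ι ℂ j * FreeAlgebra.ι ℂ i)
        (FreeAlgebra.ι ℂ j * FreeAlgebra.ι ℂ i * FreeAlgebra.ι ℂ j)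
  | comm (i j : Fin (n - 1)) (h : (i : ℕ) + 2 ≤ j ∨ (j : ℕ) + 2 ≤ i) :
      HeckeRel n (FreeAlgebra.ι ℂ i * FreeAlgebra.ι ℂ j)
        (FreeAlgebra.ι ℂ j * FreeAlgebra.ι ℂ i)

/-- The 0-Hecke algebra `H_n(0)`. -/
abbrev H (n : ℕ) := RingQuot (HeckeRel n)

/-- The generator `T_{i+1}` of `H_n(0)`. -/
def Tgen {n : ℕ} (i : Fin (n - 1)) : H n :=
  RingQuot.mkAlgHom ℂ (HeckeRel n) (FreeAlgebra.ι ℂ i)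

/-- The generator `T` acting on the 0-indexed positions `j`, `j+1`. -/
def Tpos {n : ℕ} (j : ℕ) (h : j + 1 < n) : H n := Tgen ⟨j, by omega⟩

/-- The elementary transposition exchanging the 0-indexed positions `j`, `j+1`. -/
def sw {n : ℕ} (j : ℕ) (h : j + 1 < n) : Equiv.Perm (Fin n) :=
  Equiv.swap ⟨j, by omega⟩ ⟨j + 1, h⟩

/-- The number of inversions of a permutation. -/
def invnum {n : ℕ} (σ : Equiv.Perm (Fin n)) : ℕ :=
  (Finset.univ.filter fun p : Fin n × Fin n => p.1 < p.2 ∧ σ p.2 < σ p.1).card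

/-- The Yang-Baxter element `Y_j(t, u)`: `T_j` if `t > u`, `1 + T_j` if `t ≤ u`. -/
def Ygen {n : ℕ} {α : Type*} [LinearOrder α] (j : ℕ) (h : j + 1 < n) (t u : α) : H n :=
  if t ≤ u then 1 + Tpos j h else Tpos j h

/-- `Y` is the family of Yang-Baxter basis elements: `Y_id(x) = 1` and
`Y_{s_j τ}(x) = Y_j(x_{τ⁻¹(j)}, x_{τ⁻¹(j+1)}) * Y_τ(x)` whenever `s_j τ` has one more
inversion than `τ`. -/
def IsYBFamily {n : ℕ} {α : Type*} [LinearOrder α]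
    (Y : Equiv.Perm (Fin n) → (Fin n → α) → H n) : Prop :=
  (∀ x, Y 1 x = 1) ∧
  ∀ (j : ℕ) (h : j + 1 < n) (τ : Equiv.Perm (Fin n)) (x : Fin n → α),
    invnum (sw j h * τ) = invnum τ + 1 →
    Y (sw j h * τ) x =
      Ygen j h (x (τ⁻¹ ⟨j, by omega⟩)) (x (τ⁻¹ ⟨j + 1, h⟩)) * Y τ x

/-- `i` (0-indexed, `i+1 < n`) is a descent of the permutation `σ`. -/
def descPerm {n : ℕ} (σ : Equiv.Perm (Fin n)) (i : ℕ) : Prop :=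
  ∃ h : i + 1 < n, σ ⟨i + 1, h⟩ < σ ⟨i, by omega⟩

/-- `i` (0-indexed) is a descent of the composition `I` of `n`. -/
def descComp {n : ℕ} (I : Composition n) (i : ℕ) : Prop :=
  i + 1 < n ∧ ∃ k ∈ Finset.range (n + 1), (I.blocks.take k).sum = i + 1


/-! ### Auxiliary lemmas -/

section Aux

variable {n : ℕ}

lemma swap_lt_swap_iff (u v x y : Fin n) (huv : (v : ℕ) = (u : ℕ) + 1) :
    Equiv.swap u v y < Equiv.swap u v x ↔
      ((y < x ∧ ¬(x = v ∧ y = u)) ∨ (x = u ∧ y = v)) := by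
  have hu : u ≠ v := by intro e; rw [e] at huv; omega
  simp only [Equiv.swap_apply_def]
  split_ifs <;>
    simp only [Fin.lt_def, Fin.ext_iff, not_and] at * <;> omega

lemma inv_swap_mul_apply (u v : Fin n) (σ : Equiv.Perm (Fin n)) (x : Fin n) :
    (Equiv.swap u v * σ)⁻¹ x = σ⁻¹ (Equiv.swap u v x) := by
  simp [mul_inv_rev, Equiv.Perm.mul_apply]

lemma invnum_swap_mul (σ : Equiv.Perm (Fin n)) (u v : Fin n)
    (huv : (v : ℕ) = (u : ℕ) + 1) (hlt : σ⁻¹ u < σ⁻¹ v) :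
    invnum (Equiv.swap u v * σ) = invnum σ + 1 := by
  have huvne : u ≠ v := by
    intro e; rw [e] at huv; omega
  unfold invnum
  have key : (Finset.univ.filter fun p : Fin n × Fin n =>
        p.1 < p.2 ∧ (Equiv.swap u v * σ) p.2 < (Equiv.swap u v * σ) p.1)
      = insert (σ⁻¹ u, σ⁻¹ v)
        (Finset.univ.filter fun p : Fin n × Fin n => p.1 < p.2 ∧ σ p.2 < σ p.1) := by
    ext ⟨a, b⟩
    rw [Finset.mem_insert, Finset.mem_filter, Finset.mem_filter]
    simp only [Finset.mem_univ, true_and,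
      Prod.mk.injEq, Equiv.Perm.mul_apply]
    rw [swap_lt_swap_iff u v (σ a) (σ b) huv]
    constructor
    · rintro ⟨hab, (⟨hinv, -⟩ | ⟨ha, hb⟩)⟩
      · exact Or.inr ⟨hab, hinv⟩
      · left
        constructor
        · rw [Equiv.Perm.eq_inv_iff_eq]; exact ha
        · rw [Equiv.Perm.eq_inv_iff_eq]; exact hb
    · rintro (⟨ha, hb⟩ | ⟨hab, hinv⟩)
      · subst ha; subst hb
        exact ⟨hlt, Or.inr ⟨by simp, by simp⟩⟩
      · refine ⟨hab, Or.inl ⟨hinv, ?_⟩⟩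
        rintro ⟨ha, hb⟩
        have ha' : a = σ⁻¹ v := by rw [Equiv.Perm.eq_inv_iff_eq]; exact ha
        have hb' : b = σ⁻¹ u := by rw [Equiv.Perm.eq_inv_iff_eq]; exact hb
        rw [ha', hb'] at hab
        exact absurd hab (asymm hlt)
  rw [key, Finset.card_insert_of_notMem]
  simp only [Finset.mem_filter, Finset.mem_univ, true_and,
    Equiv.Perm.inv_def, Equiv.apply_symm_apply]
  rintro ⟨-, hvu⟩
  rw [Fin.lt_def] at hvu; omega

lemma invnum_swap_le (σ : Equiv.Perm (Fin n)) (u v : Fin n)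
    (huv : (v : ℕ) = (u : ℕ) + 1) :
    invnum (Equiv.swap u v * σ) ≤ invnum σ + 1 := by
  by_cases hlt : σ⁻¹ u < σ⁻¹ v
  · rw [invnum_swap_mul σ u v huv hlt]
  · have hne : σ⁻¹ u ≠ σ⁻¹ v := by
      intro e
      have : u = v := σ⁻¹.injective e
      rw [this] at huv; omega
    have hlt' : (Equiv.swap u v * σ)⁻¹ u < (Equiv.swap u v * σ)⁻¹ v := by
      rw [inv_swap_mul_apply, inv_swap_mul_apply, Equiv.swap_apply_left,
        Equiv.swap_apply_right]
      exact lt_of_le_of_ne (le_of_not_gt hlt) (Ne.symm hne)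
    have h2 := invnum_swap_mul (Equiv.swap u v * σ) u v huv hlt'
    rw [← mul_assoc, Equiv.swap_mul_self, one_mul] at h2
    omega

lemma strictMono_perm_eq_one (σ : Equiv.Perm (Fin n)) (h : StrictMono ⇑σ) :
    σ = 1 := by
  have hinv : StrictMono ⇑σ⁻¹ := by
    intro a b hab
    rcases lt_trichotomy (σ⁻¹ a) (σ⁻¹ b) with hc | hc | hc
    · exact hc
    · exact absurd (σ⁻¹.injective (le_antisymm hc.le hc.ge)) (ne_of_lt hab)
    · have := h hc
      simp only [Equiv.Perm.inv_def, Equiv.apply_symm_apply] at this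
      exact absurd this (asymm hab)
  haveI : WellFoundedLT (Fin n) := Finite.to_wellFoundedLT
  apply Equiv.ext
  intro i
  have h1 : i ≤ σ i := h.le_apply
  have h2 : i ≤ σ⁻¹ i := hinv.le_apply
  have h3 : σ i ≤ σ (σ⁻¹ i) := h.monotone h2
  simp only [Equiv.Perm.inv_def, Equiv.apply_symm_apply] at h3
  exact le_antisymm h3 h1

lemma invnum_one : invnum (1 : Equiv.Perm (Fin n)) = 0 := by
  rw [invnum, Finset.card_eq_zero, Finset.filter_eq_empty_iff]
  rintro ⟨a, b⟩ -
  simp only [Equiv.Perm.one_apply, not_and]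
  exact fun h1 h2 => absurd h2 (asymm h1)

lemma eq_one_of_invnum_zero {σ : Equiv.Perm (Fin n)} (h : invnum σ = 0) :
    σ = 1 := by
  apply strictMono_perm_eq_one
  intro a b hab
  rcases lt_trichotomy (σ a) (σ b) with hc | hc | hc
  · exact hc
  · exact absurd (σ.injective (le_antisymm hc.le hc.ge)) (ne_of_lt hab)
  · exfalso
    rw [invnum, Finset.card_eq_zero, Finset.filter_eq_empty_iff] at h
    exact h (Finset.mem_univ (a, b)) ⟨hab, hc⟩

lemma exists_descent {σ : Equiv.Perm (Fin n)} (h : σ ≠ 1) :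
    ∃ (j : ℕ) (hj : j + 1 < n), σ⁻¹ ⟨j + 1, hj⟩ < σ⁻¹ ⟨j, by omega⟩ := by
  by_contra hc
  push_neg at hc
  apply h
  have hadj : ∀ (j : ℕ) (hj : j + 1 < n), σ⁻¹ ⟨j, by omega⟩ < σ⁻¹ ⟨j + 1, hj⟩ := by
    intro j hj
    have h1 := hc j hj
    have h2 : σ⁻¹ (⟨j, by omega⟩ : Fin n) ≠ σ⁻¹ ⟨j + 1, hj⟩ := by
      intro e
      have := σ⁻¹.injective e
      rw [Fin.ext_iff] at this
      simp at this
    exact lt_of_le_of_ne h1 h2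
  have hmono : ∀ (d a : ℕ) (hd : a + d + 1 < n),
      σ⁻¹ ⟨a, by omega⟩ < σ⁻¹ ⟨a + d + 1, hd⟩ := by
    intro d
    induction d with
    | zero => intro a hd; exact hadj a hd
    | succ d ih =>
      intro a hd
      have h1 : a + d + 1 < n := by omega
      have h2 := ih a h1
      have h3 := hadj (a + d + 1) (by omega)
      have he : (⟨a + d + 1 + 1, by omega⟩ : Fin n) = ⟨a + (d + 1) + 1, hd⟩ := by
        apply Fin.ext; simp; omega
      rw [he] at h3
      exact h2.trans h3
  have hsm : StrictMono ⇑σ⁻¹ := by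
    intro a b hab
    have hval : (a : ℕ) + ((b : ℕ) - (a : ℕ) - 1) + 1 < n := by
      have := b.isLt; rw [Fin.lt_def] at hab; omega
    have hm := hmono ((b : ℕ) - (a : ℕ) - 1) (a : ℕ) hval
    have ea : (⟨(a : ℕ), by omega⟩ : Fin n) = a := by apply Fin.ext; rfl
    have eb : (⟨(a : ℕ) + ((b : ℕ) - (a : ℕ) - 1) + 1, hval⟩ : Fin n) = b := by
      apply Fin.ext; simp; rw [Fin.lt_def] at hab; omega
    rwa [ea, eb] at hm
  have h1 : σ⁻¹ = 1 := strictMono_perm_eq_one σ⁻¹ hsm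
  rw [← inv_inv σ, h1, inv_one]

/-- The regular-representation operator on functions `Perm (Fin n) → ℂ`. -/
def Top (u v : Fin n) :
    Module.End ℂ (Equiv.Perm (Fin n) → ℂ) where
  toFun f := fun σ => if σ⁻¹ u < σ⁻¹ v then 0 else f (Equiv.swap u v * σ) - f σ
  map_add' f g := by
    funext σ
    by_cases h : σ⁻¹ u < σ⁻¹ v <;> rw [Equiv.Perm.inv_def] at h <;> simp [h] <;> ring
  map_smul' c f := by
    funext σ
    by_cases h : σ⁻¹ u < σ⁻¹ v <;> rw [Equiv.Perm.inv_def] at h <;> simp [h] <;> ring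

lemma Top_apply (u v : Fin n) (f : Equiv.Perm (Fin n) → ℂ)
    (σ : Equiv.Perm (Fin n)) :
    Top u v f σ = if σ⁻¹ u < σ⁻¹ v then 0 else f (Equiv.swap u v * σ) - f σ := rfl

lemma Top_quad (u v : Fin n) (huv : u ≠ v) :
    (Top u v) * (1 + Top u v) = 0 := by
  apply LinearMap.ext; intro f; funext σ
  have hne : σ⁻¹ u ≠ σ⁻¹ v := fun e => huv (σ⁻¹.injective e)
  simp only [Module.End.mul_apply, LinearMap.add_apply, Module.End.one_apply,
    LinearMap.zero_apply, Pi.zero_apply, Pi.add_apply, Top_apply]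
  by_cases h : σ⁻¹ u < σ⁻¹ v
  · rw [if_pos h]
  · have hcond : (Equiv.swap u v * σ)⁻¹ u < (Equiv.swap u v * σ)⁻¹ v := by
      rw [inv_swap_mul_apply, inv_swap_mul_apply, Equiv.swap_apply_left,
        Equiv.swap_apply_right]
      exact lt_of_le_of_ne (le_of_not_gt h) (Ne.symm hne)
    rw [if_neg h, if_pos hcond, if_neg h]
    ring

lemma Top_braid (u v w : Fin n) (huv : u ≠ v) (huw : u ≠ w) (hvw : v ≠ w) :
    Top u v * Top v w * Top u v = Top v w * Top u v * Top v w := by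
  have e1 : Equiv.swap u v w = w := Equiv.swap_apply_of_ne_of_ne huw.symm hvw.symm
  have e2 : Equiv.swap v w u = u := Equiv.swap_apply_of_ne_of_ne huv huw
  have hsss : Equiv.swap u v * Equiv.swap v w * Equiv.swap u v
      = Equiv.swap v w * Equiv.swap u v * Equiv.swap v w := by
    calc Equiv.swap u v * Equiv.swap v w * Equiv.swap u v
        = Equiv.swap v u * Equiv.swap w v * Equiv.swap v u := by
          rw [Equiv.swap_comm u v, Equiv.swap_comm v w]
      _ = Equiv.swap u w := Equiv.swap_mul_swap_mul_swap hvw.symm (Ne.symm huw)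
      _ = Equiv.swap w u := Equiv.swap_comm _ _
      _ = Equiv.swap v w * Equiv.swap u v * Equiv.swap v w :=
          (Equiv.swap_mul_swap_mul_swap huv huw).symm
  apply LinearMap.ext; intro f; funext σ
  have hswap : Equiv.swap u v * (Equiv.swap v w * (Equiv.swap u v * σ))
      = Equiv.swap v w * (Equiv.swap u v * (Equiv.swap v w * σ)) := by
    simp only [← mul_assoc, hsss]
  have hab : (σ⁻¹ u : Fin n).val ≠ (σ⁻¹ v).val := by
    intro e; exact huv (σ⁻¹.injective (Fin.ext e))
  have hac : (σ⁻¹ u : Fin n).val ≠ (σ⁻¹ w).val := by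
    intro e; exact huw (σ⁻¹.injective (Fin.ext e))
  have hbc : (σ⁻¹ v : Fin n).val ≠ (σ⁻¹ w).val := by
    intro e; exact hvw (σ⁻¹.injective (Fin.ext e))
  simp only [Module.End.mul_apply, Top_apply, inv_swap_mul_apply,
    Equiv.swap_apply_left, Equiv.swap_apply_right, e1, e2]
  split_ifs <;> (try (exfalso; simp only [Fin.lt_def] at *; omega)) <;>
    (try ring) <;> (try rw [hswap]) <;> (try rw [← hswap]) <;> ring

lemma Top_comm (u v w z : Fin n) (huw : u ≠ w) (huz : u ≠ z)
    (hvw : v ≠ w) (hvz : v ≠ z) :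
    Top u v * Top w z = Top w z * Top u v := by
  have e1 : Equiv.swap u v w = w := Equiv.swap_apply_of_ne_of_ne huw.symm hvw.symm
  have e2 : Equiv.swap u v z = z := Equiv.swap_apply_of_ne_of_ne huz.symm hvz.symm
  have e3 : Equiv.swap w z u = u := Equiv.swap_apply_of_ne_of_ne huw huz
  have e4 : Equiv.swap w z v = v := Equiv.swap_apply_of_ne_of_ne hvw hvz
  have hss : Equiv.swap u v * Equiv.swap w z = Equiv.swap w z * Equiv.swap u v := by
    rw [Equiv.swap_mul_eq_mul_swap]
    simp only [Equiv.swap_inv, e3, e4]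
  apply LinearMap.ext; intro f; funext σ
  have hswap : ∀ ρ : Equiv.Perm (Fin n), Equiv.swap u v * (Equiv.swap w z * ρ)
      = Equiv.swap w z * (Equiv.swap u v * ρ) := by
    intro ρ; simp only [← mul_assoc, hss]
  simp only [Module.End.mul_apply, Top_apply, inv_swap_mul_apply,
    Equiv.swap_apply_left, Equiv.swap_apply_right, e1, e2, e3, e4]
  split_ifs <;> (try ring) <;> (try rw [hswap]) <;> (try rw [← hswap]) <;> ring

def finu (i : Fin (n - 1)) : Fin n := ⟨i.1, by have := i.isLt; omega⟩
def finv (i : Fin (n - 1)) : Fin n := ⟨i.1 + 1, by have := i.isLt; omega⟩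

/-- The left regular representation of the `0`-Hecke algebra. -/
def rho (n : ℕ) : H n →ₐ[ℂ] Module.End ℂ (Equiv.Perm (Fin n) → ℂ) :=
  RingQuot.liftAlgHom ℂ ⟨FreeAlgebra.lift ℂ (fun i : Fin (n - 1) => Top (finu i) (finv i)),
    by
      intro a b hab
      induction hab with
      | quad i =>
        simp only [map_mul, map_add, map_one, map_zero, FreeAlgebra.lift_ι_apply]
        exact Top_quad _ _ (by simp only [finu, finv, ne_eq, Fin.mk.injEq]; omega)
      | braid i j hij =>
        simp only [map_mul, FreeAlgebra.lift_ι_apply]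
        have hji : finu j = finv i := by
          simp only [finu, finv, Fin.mk.injEq]; omega
        rw [hji]
        have hvj : finv j = ⟨(i : ℕ) + 2, by have := j.isLt; omega⟩ := by
          simp only [finv, Fin.mk.injEq]; omega
        rw [hvj]
        exact Top_braid _ _ _ (by simp only [finu, finv, ne_eq, Fin.mk.injEq]; omega)
          (by simp only [finu, ne_eq, Fin.mk.injEq]; omega)
          (by simp only [finv, ne_eq, Fin.mk.injEq]; omega)
      | comm i j hij =>
        simp only [map_mul, FreeAlgebra.lift_ι_apply]
        exact Top_comm _ _ _ _ (by simp only [finu, ne_eq, Fin.mk.injEq]; omega)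
          (by simp only [finu, finv, ne_eq, Fin.mk.injEq]; omega)
          (by simp only [finu, finv, ne_eq, Fin.mk.injEq]; omega)
          (by simp only [finv, ne_eq, Fin.mk.injEq]; omega)⟩

lemma rho_Tgen (i : Fin (n - 1)) :
    rho n (Tgen i) = Top (finu i) (finv i) := by
  rw [rho, Tgen, RingQuot.liftAlgHom_mkAlgHom_apply, FreeAlgebra.lift_ι_apply]

lemma Tgen_quad (i : Fin (n - 1)) : Tgen i * (1 + Tgen i) = 0 := by
  have h := RingQuot.mkAlgHom_rel ℂ (HeckeRel.quad (n := n) i)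
  simpa [Tgen, map_mul, map_add, map_one, map_zero] using h

lemma Tgen_sq (i : Fin (n - 1)) : Tgen i * Tgen i = -Tgen i := by
  have h := Tgen_quad i
  rw [mul_add, mul_one] at h
  exact eq_neg_of_add_eq_zero_left (by rw [add_comm]; exact h)

/-- The indicator function of the identity permutation. -/
def e1 (n : ℕ) : Equiv.Perm (Fin n) → ℂ := fun ρ => if ρ = 1 then 1 else 0

lemma rho_Y {Y : Equiv.Perm (Fin n) → (Fin n → Fin n) → H n}
    (hY : IsYBFamily Y) (x : Fin n → Fin n) :
    ∀ (k : ℕ) (σ : Equiv.Perm (Fin n)), invnum σ = k →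
      (rho n (Y σ x)) (e1 n) σ = 1 ∧
      ∀ μ, (rho n (Y σ x)) (e1 n) μ ≠ 0 → invnum μ ≤ k := by
  intro k
  induction k with
  | zero =>
    intro σ hσ
    have h1 : σ = 1 := eq_one_of_invnum_zero hσ
    subst h1
    rw [hY.1, map_one]
    constructor
    · simp [e1]
    · intro μ hμ
      simp only [Module.End.one_apply, e1] at hμ
      by_cases hμ1 : μ = 1
      · subst hμ1; rw [invnum_one]
      · simp [hμ1] at hμ
  | succ k ih =>
    intro σ hσ
    have hne1 : σ ≠ 1 := by
      intro e; rw [e, invnum_one] at hσ; omega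
    obtain ⟨j, hj, hdes⟩ := exists_descent hne1
    set u : Fin n := ⟨j, by omega⟩ with hu
    set v : Fin n := ⟨j + 1, hj⟩ with hv
    have hswσ : sw j hj = Equiv.swap u v := rfl
    set σ' : Equiv.Perm (Fin n) := sw j hj * σ with hσ'def
    have hss : sw j hj * σ' = σ := by
      rw [hσ'def, ← mul_assoc, hswσ, Equiv.swap_mul_self, one_mul]
    have hpos : σ'⁻¹ u < σ'⁻¹ v := by
      rw [hσ'def, hswσ, inv_swap_mul_apply, inv_swap_mul_apply,
        Equiv.swap_apply_left, Equiv.swap_apply_right]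
      exact hdes
    have hinvs : invnum σ = invnum σ' + 1 := by
      conv_lhs => rw [← hss, hswσ]
      exact invnum_swap_mul σ' u v (by simp [hu, hv]) hpos
    have hk' : invnum σ' = k := by omega
    have hrec0 := hY.2 j hj σ' x (by rw [hss, hσ]; omega)
    rw [hss] at hrec0
    have hrec : Y σ x = Ygen j hj (x (σ'⁻¹ u)) (x (σ'⁻¹ v)) * Y σ' x := hrec0
    obtain ⟨ih1, ih2⟩ := ih σ' hk'
    have hσ0 : (rho n (Y σ' x)) (e1 n) σ = 0 := by
      by_contra hcon
      have := ih2 σ hcon; omega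
    have hsσ' : Equiv.swap u v * σ = σ' := by rw [hσ'def, hswσ]
    have hnotlt : ¬ σ⁻¹ u < σ⁻¹ v := asymm hdes
    have hTop1 : (Top u v) ((rho n (Y σ' x)) (e1 n)) σ = 1 := by
      rw [Top_apply, if_neg hnotlt, hsσ', ih1, hσ0]
      ring
    have hTople : ∀ μ, (Top u v) ((rho n (Y σ' x)) (e1 n)) μ ≠ 0 →
        invnum μ ≤ k + 1 := by
      intro μ hμ
      rw [Top_apply] at hμ
      by_cases hc : μ⁻¹ u < μ⁻¹ v
      · rw [if_pos hc] at hμ; exact absurd rfl hμ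
      · rw [if_neg hc] at hμ
        by_cases h1 : (rho n (Y σ' x)) (e1 n) (Equiv.swap u v * μ) = 0
        · have h2 : (rho n (Y σ' x)) (e1 n) μ ≠ 0 := by
            intro h3; rw [h1, h3] at hμ; simp at hμ
          exact (ih2 μ h2).trans (by omega)
        · have h4 := ih2 _ h1
          have h5 : invnum μ ≤ invnum (Equiv.swap u v * μ) + 1 := by
            have h6 := invnum_swap_le (Equiv.swap u v * μ) u v (by simp [hu, hv])
            rw [← mul_assoc, Equiv.swap_mul_self, one_mul] at h6
            exact h6
          omega
    have hT : rho n (Tpos j hj) = Top u v := rho_Tgen _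
    by_cases hle : x (σ'⁻¹ u) ≤ x (σ'⁻¹ v)
    · have hY2 : rho n (Y σ x) = (1 + Top u v) * rho n (Y σ' x) := by
        rw [hrec, map_mul, Ygen, if_pos hle, map_add, map_one, hT]
      rw [hY2]
      constructor
      · simp only [Module.End.mul_apply, LinearMap.add_apply, Module.End.one_apply,
          Pi.add_apply]
        rw [hTop1, hσ0]; ring
      · intro μ hμ
        simp only [Module.End.mul_apply, LinearMap.add_apply, Module.End.one_apply,
          Pi.add_apply] at hμ
        by_cases hz : (Top u v) ((rho n (Y σ' x)) (e1 n)) μ = 0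
        · have : (rho n (Y σ' x)) (e1 n) μ ≠ 0 := by
            intro h3; rw [h3, hz] at hμ; simp at hμ
          exact (ih2 μ this).trans (by omega)
        · exact hTople μ hz
    · have hY2 : rho n (Y σ x) = Top u v * rho n (Y σ' x) := by
        rw [hrec, map_mul, Ygen, if_neg hle, hT]
      rw [hY2]
      constructor
      · simp only [Module.End.mul_apply]
        exact hTop1
      · intro μ hμ
        simp only [Module.End.mul_apply] at hμ
        exact hTople μ hμ


lemma rev_inv_eq : (Fin.revPerm : Equiv.Perm (Fin n))⁻¹ = Fin.revPerm := by
  rw [Equiv.Perm.inv_def, Fin.revPerm_symm]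

lemma sigma'_inv_u (j : ℕ) (h : j + 1 < n) :
    ((sw j h * Fin.revPerm : Equiv.Perm (Fin n)))⁻¹ (⟨j, by omega⟩ : Fin n)
      = ⟨n - 2 - j, by omega⟩ := by
  rw [sw, inv_swap_mul_apply, Equiv.swap_apply_left, rev_inv_eq, Fin.revPerm_apply]
  apply Fin.ext
  rw [Fin.val_rev]
  show n - (j + 1 + 1) = n - 2 - j
  omega

lemma sigma'_inv_v (j : ℕ) (h : j + 1 < n) :
    ((sw j h * Fin.revPerm : Equiv.Perm (Fin n)))⁻¹ (⟨j + 1, h⟩ : Fin n)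
      = ⟨n - 2 - j + 1, by omega⟩ := by
  rw [sw, inv_swap_mul_apply, Equiv.swap_apply_right, rev_inv_eq, Fin.revPerm_apply]
  apply Fin.ext
  rw [Fin.val_rev]
  show n - (j + 1) = n - 2 - j + 1
  omega

lemma sw_mul_sw_mul_rev (j : ℕ) (h : j + 1 < n) :
    (sw j h * (sw j h * Fin.revPerm) : Equiv.Perm (Fin n)) = Fin.revPerm := by
  rw [← mul_assoc, sw, Equiv.swap_mul_self, one_mul]

lemma invnum_step_rev (j : ℕ) (h : j + 1 < n) :
    invnum (sw j h * (sw j h * Fin.revPerm) : Equiv.Perm (Fin n))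
      = invnum (sw j h * Fin.revPerm : Equiv.Perm (Fin n)) + 1 := by
  have hpos : ((sw j h * Fin.revPerm : Equiv.Perm (Fin n)))⁻¹ ⟨j, by omega⟩
      < ((sw j h * Fin.revPerm : Equiv.Perm (Fin n)))⁻¹ ⟨j + 1, h⟩ := by
    rw [sigma'_inv_u j h, sigma'_inv_v j h, Fin.lt_def]
    show n - 2 - j < n - 2 - j + 1
    omega
  exact invnum_swap_mul (sw j h * Fin.revPerm) ⟨j, by omega⟩ ⟨j + 1, h⟩ rfl hpos

lemma YB_rev_step {Y : Equiv.Perm (Fin n) → (Fin n → Fin n) → H n}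
    (hY : IsYBFamily Y) (x : Fin n → Fin n) (j : ℕ) (h : j + 1 < n) :
    Y Fin.revPerm x
      = Ygen j h (x ⟨n - 2 - j, by omega⟩) (x ⟨n - 2 - j + 1, by omega⟩)
          * Y (sw j h * Fin.revPerm) x := by
  have h0 := hY.2 j h (sw j h * Fin.revPerm) x (invnum_step_rev j h)
  rw [sw_mul_sw_mul_rev j h, sigma'_inv_u j h, sigma'_inv_v j h] at h0
  exact h0

end Aux

set_option maxHeartbeats 1000000 in
theorem yangBaxter_eta (n : ℕ)
    (Y : Equiv.Perm (Fin n) → (Fin n → Fin n) → H n) (hY : IsYBFamily Y)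
    (I : Composition n) (τ : Equiv.Perm (Fin n))
    (hτ : ∀ i : ℕ, i + 1 < n → (descComp I i ↔ descPerm τ (n - 2 - i))) :
    (∀ (j : ℕ) (h : j + 1 < n),
      (descComp I j → Tpos j h * Y Fin.revPerm ⇑τ = -(Y Fin.revPerm ⇑τ)) ∧
      (¬ descComp I j → Tpos j h * Y Fin.revPerm ⇑τ = 0)) ∧
    Y Fin.revPerm ⇑τ ≠ 0 := by
  constructor
  · intro j h
    have hrec := YB_rev_step hY ⇑τ j h
    constructor
    · intro hd
      obtain ⟨hh, hlt⟩ := (hτ j h).1 hd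
      have hYg : Ygen j h (τ (⟨n - 2 - j, by omega⟩ : Fin n)) (τ ⟨n - 2 - j + 1, by omega⟩)
          = Tpos j h := by
        rw [Ygen, if_neg]
        exact not_le.2 hlt
      rw [hrec, hYg, ← mul_assoc]
      have hsq : Tpos j h * Tpos j h = -Tpos j h := Tgen_sq _
      rw [hsq]
      exact neg_mul (Tpos j h) (Y (sw j h * Fin.revPerm) ⇑τ)
    · intro hd
      have hndp : ¬ descPerm τ (n - 2 - j) := fun hp => hd ((hτ j h).2 hp)
      have hle : τ (⟨n - 2 - j, by omega⟩ : Fin n) ≤ τ ⟨n - 2 - j + 1, by omega⟩ := by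
        by_contra hcon
        push_neg at hcon
        exact hndp ⟨by omega, hcon⟩
      have hYg : Ygen j h (τ (⟨n - 2 - j, by omega⟩ : Fin n)) (τ ⟨n - 2 - j + 1, by omega⟩)
          = 1 + Tpos j h := by
        rw [Ygen, if_pos]
        exact hle
      rw [hrec, hYg, ← mul_assoc]
      have hq : Tpos j h * (1 + Tpos j h) = 0 := Tgen_quad _
      rw [hq, zero_mul]
  · intro h0
    have hmain := (rho_Y hY ⇑τ (invnum (Fin.revPerm : Equiv.Perm (Fin n)))
      Fin.revPerm rfl).1
    rw [h0, map_zero] at hmain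
    simp at hmain

end

end AKSPaper
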